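/- The map F(x,y) = ((x-y)²/((1-x)x), (x-y)²/((1-y)y)) from the open triangle Δ = {(x,y) : 0 < y < x < 1} into ℝ² is injective. -/

import Mathlib

theorem F_injective_on_triangle :
    Set.InjOn
      (fun p : ℝ × ℝ =>
        ((p.1 - p.2) ^ 2 / ((1 - p.1) * p.1), (p.1 - p.2) ^ 2 / ((1 - p.2) * p.2)))
      {p : ℝ × ℝ | 0 < p.2 ∧ p.2 < p.1 ∧ p.1 < 1} := by
  rintro ⟨x, y⟩ ⟨hy, hyx, hx⟩ ⟨u, v⟩ ⟨hv, hvu, hu⟩ heq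
  simp only [Prod.mk.injEq] at heq
  obtain ⟨h1, h2⟩ := heq
  simp only at *
  have dx : (1 - x) * x > 0 := by nlinarith
  have dy : (1 - y) * y > 0 := by nlinarith
  have du : (1 - u) * u > 0 := by nlinarith
  have dv : (1 - v) * v > 0 := by nlinarith
  have ht : 0 < x - y := by linarith
  have hw : 0 < u - v := by linarith
  have e1 : (x - y) ^ 2 * ((1 - u) * u) = (u - v) ^ 2 * ((1 - x) * x) := by
    rw [div_eq_div_iff (ne_of_gt dx) (ne_of_gt du)] at h1
    linarith [h1]
  have e2 : (x - y) ^ 2 * ((1 - v) * v) = (u - v) ^ 2 * ((1 - y) * y) := by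
    rw [div_eq_div_iff (ne_of_gt dy) (ne_of_gt dv)] at h2
    linarith [h2]
  have hdiff : (x - y) * (1 - u - v) = (u - v) * (1 - x - y) := by
    have hne : (x - y) * (u - v) ≠ 0 := by positivity
    apply mul_left_cancel₀ hne
    linear_combination e1 - e2
  have hsq : (x - y) ^ 2 = (u - v) ^ 2 := by
    linear_combination 2 * e1 + 2 * e2 +
      ((x - y) * (1 - u - v) + (u - v) * (1 - x - y)) * hdiff
  have htw : x - y = u - v := by nlinarith
  have hP : 1 - u - v = 1 - x - y := by
    apply mul_left_cancel₀ (ne_of_gt ht)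
    linear_combination hdiff - (1 - x - y) * htw
  have hxu : x = u := by linarith
  have hyv : y = v := by linarith
  simp [hxu, hyv]
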